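/- arXiv:0802.2087 — 9 statements merged into one kernel-verified Lean document; each statement's English description precedes it below -/
import Mathlib

section
/- Let K, L, k, ℓ be integers with K > 1, L > 1, 1 ≤ k ≤ K, 1 ≤ ℓ ≤ L, and k + ℓ < K + L. Then ((K+L)²/(K+L−1))·((K+L)/(k+ℓ) − 1) − (K²/(K−1))·(K/k − 1) − (L²/(L−1))·(L/ℓ − 1) < 0. -/
set_option maxHeartbeats 1000000 in
/-- The two-strata inequality behind Theorem 2. -/
theorem two_strata_inequality (K L k l : ℕ) (hK : 1 < K) (hL : 1 < L)
    (hk1 : 1 ≤ k) (hkK : k ≤ K) (hl1 : 1 ≤ l) (hlL : l ≤ L) (hkl : k + l < K + L) :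
    (((K : ℝ) + L) ^ 2 / ((K : ℝ) + L - 1)) * (((K : ℝ) + L) / ((k : ℝ) + l) - 1)
      - ((K : ℝ) ^ 2 / ((K : ℝ) - 1)) * ((K : ℝ) / k - 1)
      - ((L : ℝ) ^ 2 / ((L : ℝ) - 1)) * ((L : ℝ) / l - 1) < 0 := by
  set a : ℝ := (K : ℝ) with ha'
  set b : ℝ := (L : ℝ) with hb'
  set x : ℝ := (k : ℝ) with hx'
  set y : ℝ := (l : ℝ) with hy'
  have ha : (2:ℝ) ≤ a := by rw [ha']; exact_mod_cast hK
  have hb : (2:ℝ) ≤ b := by rw [hb']; exact_mod_cast hL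
  have hx : (1:ℝ) ≤ x := by rw [hx']; exact_mod_cast hk1
  have hy : (1:ℝ) ≤ y := by rw [hy']; exact_mod_cast hl1
  have hxa : x ≤ a := by rw [hx', ha']; exact_mod_cast hkK
  have hyb : y ≤ b := by rw [hy', hb']; exact_mod_cast hlL
  have hsum : x + y + 1 ≤ a + b := by
    rw [hx', hy', ha', hb']
    have : ((k + l : ℕ) : ℝ) + 1 ≤ ((K + L : ℕ) : ℝ) := by exact_mod_cast hkl
    push_cast at this; linarith
  have hx0 : (0:ℝ) < x := by linarith
  have hy0 : (0:ℝ) < y := by linarith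
  have ht0 : (0:ℝ) < x + y := by linarith
  have ha1 : (0:ℝ) < a - 1 := by linarith
  have hb1 : (0:ℝ) < b - 1 := by linarith
  have hs1 : (0:ℝ) < a + b - 1 := by linarith
  have hs0 : (0:ℝ) < a + b := by linarith
  -- Cauchy–Schwarz step
  have h1 : (a + b) / (x + y) ≤ (a^2*y + b^2*x) / ((a+b)*(x*y)) := by
    rw [div_le_div_iff₀ ht0 (by positivity)]
    nlinarith [sq_nonneg (a*y - b*x)]
  have h2 : (a*(a/x - 1) + b*(b/y - 1)) / (a+b)
      = (a^2*y + b^2*x) / ((a+b)*(x*y)) - 1 := by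
    field_simp
    ring
  have cauchy : (a + b) / (x + y) - 1 ≤ (a*(a/x - 1) + b*(b/y - 1)) / (a+b) := by
    rw [h2]; linarith
  -- coefficient comparisons
  have c1 : (a+b)*a/(a+b-1) < a^2/(a-1) := by
    rw [div_lt_div_iff₀ hs1 ha1]
    nlinarith [mul_pos (show (0:ℝ) < a by linarith) (show (0:ℝ) < b by linarith)]
  have c2 : (a+b)*b/(a+b-1) < b^2/(b-1) := by
    rw [div_lt_div_iff₀ hs1 hb1]
    nlinarith [mul_pos (show (0:ℝ) < a by linarith) (show (0:ℝ) < b by linarith)]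
  have hg1 : (0:ℝ) ≤ a/x - 1 := by
    rw [sub_nonneg, le_div_iff₀ hx0]; linarith
  have hg2 : (0:ℝ) ≤ b/y - 1 := by
    rw [sub_nonneg, le_div_iff₀ hy0]; linarith
  have eL : ((a+b)^2/(a+b-1)) * ((a*(a/x - 1) + b*(b/y - 1)) / (a+b))
      = ((a+b)*a/(a+b-1)) * (a/x - 1) + ((a+b)*b/(a+b-1)) * (b/y - 1) := by
    rw [div_mul_div_comm, div_mul_eq_mul_div, div_mul_eq_mul_div, div_add_div _ _ (ne_of_gt hs1) (ne_of_gt hs1), mul_comm (a+b-1) (a+b)]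
    rw [div_eq_div_iff (by positivity) (by positivity)]
    ring
  have step2 : ((a+b)^2/(a+b-1)) * ((a*(a/x - 1) + b*(b/y - 1)) / (a+b))
      < (a^2/(a-1)) * (a/x - 1) + (b^2/(b-1)) * (b/y - 1) := by
    rw [eL]
    rcases lt_or_eq_of_le hxa with h | h
    · have hg1' : (0:ℝ) < a/x - 1 := by
        rw [sub_pos, lt_div_iff₀ hx0]; linarith
      linarith [mul_lt_mul_of_pos_right c1 hg1',
        mul_le_mul_of_nonneg_right (le_of_lt c2) hg2]
    · have hg2' : (0:ℝ) < b/y - 1 := by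
        rw [sub_pos, lt_div_iff₀ hy0]; linarith
      linarith [mul_lt_mul_of_pos_right c2 hg2',
        mul_le_mul_of_nonneg_right (le_of_lt c1) hg1]
  have step1 : ((a+b)^2/(a+b-1)) * ((a+b)/(x+y) - 1)
      ≤ ((a+b)^2/(a+b-1)) * ((a*(a/x - 1) + b*(b/y - 1)) / (a+b)) :=
    mul_le_mul_of_nonneg_left cauchy (by positivity)
  linarith
end

section
/- Theorem 3, case (c1): Let m ≥ 2, let N_1,…,N_m ≥ 2 be integers with N = ∑_{j=1}^m N_j, let p ∈ (0,1), and let (n_1,…,n_m) be integers with 1 ≤ n_j ≤ (3/4)·N_j for all j and n = ∑_{j=1}^m n_j < N. Set B = ((N−n)/(N−m))·p(1−p)/n. Then ∑_{j=1}^m (N_j/N)² · (p(1−p)/n_j) · (N_j−n_j)/(N_j−1) ≥ B, with equality if and only if n_j = n/m and N_j = N/m for every j. -/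
open Finset

private lemma sq_pos_of_ne' {a : ℝ} (h : a ≠ 0) : 0 < a^2 := by
  rw [← sq_abs]; exact pow_pos (abs_pos.2 h) 2

private lemma E_nonneg (p q r s : ℝ) (hq : 0 < q) (hs : 0 < s)
    (h1 : 4*q ≤ 3*p) (h2 : 4*s ≤ 3*r) :
    0 ≤ p^3*s^2 - p^2*q*s^2 - r^2*q*s^2 - 3*r^2*s*p*q + r^3*q*s + 2*r*s^2*p*q + r^3*q^2 := by
  have hp0 : 0 < p := by linarith
  have hr0 : 0 < r := by linarith
  rcases le_or_gt r (4*(p-q)) with hA | hB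
  · have key : 0 ≤ r*(s^2*(p-r)^2*(4*(p-q)-r)) :=
      mul_nonneg hr0.le (mul_nonneg (mul_nonneg (sq_nonneg s) (sq_nonneg (p-r))) (by linarith))
    nlinarith [key, sq_nonneg (2*r^2*(q-s) - 3*r*s*(p-r)), hr0]
  · rcases le_or_gt s q with hB0 | hqs
    · have t1 : 0 ≤ s^2*(2*r+p-q)*(p-r)^2 :=
        mul_nonneg (mul_nonneg (sq_nonneg s) (by linarith)) (sq_nonneg (p-r))
      have t2 : 0 ≤ 3*r^2*s*((r-p)*(q-s)) :=
        mul_nonneg (by positivity) (mul_nonneg (by linarith) (by linarith))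
      have t3 : 0 ≤ r^3*(q-s)^2 := by positivity
      linarith
    · rcases le_or_gt (2*s) r with hB1 | hB2
      · have t1 : 0 ≤ s^2*p^2*(p-q) :=
          mul_nonneg (mul_nonneg (sq_nonneg s) (sq_nonneg p)) (by linarith)
        have t2 : 0 ≤ q*r*((r-2*s)*(q*(r-s)+r*s/4)) :=
          mul_nonneg (mul_nonneg hq.le hr0.le) (mul_nonneg (by linarith)
            (by nlinarith [mul_nonneg hq.le (show (0:ℝ) ≤ r - s by linarith), mul_pos hr0 hs]))
        have t3 : 0 ≤ r*s*q*((3*r-2*s)*(q+r/4-p)) :=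
          mul_nonneg (mul_nonneg (mul_nonneg hr0.le hs.le) hq.le)
            (mul_nonneg (by linarith) (by linarith))
        linarith
      · have hu1 : (0:ℝ) ≤ 3*p-4*q := by linarith
        have hu2 : (0:ℝ) ≤ 3*r-4*s := by linarith
        have hc1x : (0:ℝ) ≤ r-4*(p-q) := by linarith
        have hc2x : (0:ℝ) ≤ 2*s-r := by linarith
        have hc3x : (0:ℝ) ≤ s-q := by linarith
        linarith [mul_nonneg (mul_nonneg (mul_nonneg hq.le hs.le) hu1) (sq_nonneg ((p-r)-(q-s))),
      mul_nonneg (mul_nonneg (mul_nonneg hq.le hq.le) hu1) (sq_nonneg ((p-r)-(q-s))),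
      mul_nonneg (mul_nonneg (mul_nonneg hq.le hq.le) hu2) (sq_nonneg ((p-r)-2*(q-s))),
      mul_nonneg (mul_nonneg (mul_nonneg hq.le hq.le) hc1x) (sq_nonneg (2*(p-r)-(q-s))),
      mul_nonneg (mul_nonneg (mul_nonneg hq.le hc1x) hc1x) (sq_nonneg (q-s)),
      mul_nonneg (mul_nonneg (mul_nonneg hs.le hu1) hc3x) (sq_nonneg (p-q)),
      mul_nonneg (mul_nonneg (mul_nonneg hq.le hc1x) hc1x) (sq_nonneg (p-r)),
      mul_nonneg (mul_nonneg (mul_nonneg hq.le hu1) hu2) (sq_nonneg p),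
      mul_nonneg (mul_nonneg (mul_nonneg hq.le hs.le) hs.le) (sq_nonneg ((p-r)-(q-s))),
      mul_nonneg (mul_nonneg (mul_nonneg hq.le hc1x) hc1x) (sq_nonneg p),
      mul_nonneg (mul_nonneg (mul_nonneg hq.le hq.le) hc1x) (sq_nonneg ((p-r)-(q-s))),
      mul_nonneg (mul_nonneg (mul_nonneg hq.le hu1) hu1) (sq_nonneg ((p-r)-(q-s))),
      mul_nonneg (mul_nonneg (mul_nonneg hq.le hu2) hc2x) (sq_nonneg ((p-r)-(q-s))),
      mul_nonneg (mul_nonneg (mul_nonneg hq.le hu2) hc3x) (sq_nonneg p),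
      mul_nonneg (mul_nonneg (mul_nonneg hq.le hu1) hc1x) (sq_nonneg (2*(p-r)-(q-s))),
      mul_nonneg (mul_nonneg (mul_nonneg hq.le hu1) hu2) (sq_nonneg (p-q)),
      mul_nonneg (mul_nonneg (mul_nonneg hq.le hu1) hc1x) (sq_nonneg p),
      mul_nonneg (mul_nonneg (mul_nonneg hq.le hu1) hu2) (sq_nonneg ((p-r)-2*(q-s))),
      mul_nonneg (mul_nonneg (mul_nonneg hq.le hu2) hc1x) (sq_nonneg (p-r)),
      mul_nonneg (mul_nonneg (mul_nonneg hq.le hq.le) hu2) (sq_nonneg ((p-r)-(q-s))),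
      mul_nonneg (mul_nonneg (mul_nonneg hq.le hc1x) hc1x) (sq_nonneg (p-q)),
      mul_nonneg (mul_nonneg (mul_nonneg hq.le hq.le) hq.le) (sq_nonneg ((p-r)-(q-s))),
      mul_nonneg (mul_nonneg (mul_nonneg hq.le hu2) hc1x) (sq_nonneg (p-q)),
      mul_nonneg (mul_nonneg (mul_nonneg hq.le hu2) hc2x) (sq_nonneg ((p-r)-2*(q-s))),
      mul_nonneg (mul_nonneg (mul_nonneg hq.le hs.le) hc2x) (sq_nonneg ((p-r)-(q-s))),
      mul_nonneg (mul_nonneg (mul_nonneg hq.le hu1) hc1x) (sq_nonneg (p-q))]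

private lemma E_pos (p q r s : ℝ) (hq : 0 < q) (hs : 0 < s)
    (h1 : 4*q ≤ 3*p) (h2 : 4*s ≤ 3*r) (hne : ¬(p = r ∧ q = s)) :
    0 < p^3*s^2 - p^2*q*s^2 - r^2*q*s^2 - 3*r^2*s*p*q + r^3*q*s + 2*r*s^2*p*q + r^3*q^2 := by
  have hp0 : 0 < p := by linarith
  have hr0 : 0 < r := by linarith
  by_cases hpr : p = r
  · have hqs : q ≠ s := by tauto
    subst hpr
    have h0 : 0 < (q-s)^2 := sq_pos_of_ne' (sub_ne_zero.2 hqs)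
    nlinarith [mul_pos (pow_pos hp0 3) h0]
  · have hpr2 : 0 < (p-r)^2 := sq_pos_of_ne' (sub_ne_zero.2 hpr)
    rcases lt_or_ge r (4*(p-q)) with hA | hB
    · have key : 0 < r*(s^2*(p-r)^2*(4*(p-q)-r)) :=
        mul_pos hr0 (mul_pos (mul_pos (pow_pos hs 2) hpr2) (by linarith))
      nlinarith [key, sq_nonneg (2*r^2*(q-s) - 3*r*s*(p-r)), hr0]
    · have hprlt : p < r := lt_of_le_of_ne (by linarith) hpr
      rcases le_or_gt s q with hB0 | hqs
      · have t1 : 0 < s^2*(2*r+p-q)*(p-r)^2 :=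
          mul_pos (mul_pos (pow_pos hs 2) (by linarith)) hpr2
        have t2 : 0 ≤ 3*r^2*s*((r-p)*(q-s)) :=
          mul_nonneg (by positivity) (mul_nonneg (by linarith) (by linarith))
        have t3 : 0 ≤ r^3*(q-s)^2 := by positivity
        linarith
      · rcases le_or_gt (2*s) r with hB1 | hB2
        · have t1 : 0 < s^2*p^2*(p-q) :=
            mul_pos (mul_pos (pow_pos hs 2) (pow_pos hp0 2)) (by linarith)
          have t2 : 0 ≤ q*r*((r-2*s)*(q*(r-s)+r*s/4)) :=
            mul_nonneg (mul_nonneg hq.le hr0.le) (mul_nonneg (by linarith)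
              (by nlinarith [mul_nonneg hq.le (show (0:ℝ) ≤ r - s by linarith), mul_pos hr0 hs]))
          have t3 : 0 ≤ r*s*q*((3*r-2*s)*(q+r/4-p)) :=
            mul_nonneg (mul_nonneg (mul_nonneg hr0.le hs.le) hq.le)
              (mul_nonneg (by linarith) (by linarith))
          linarith
        · by_cases hud : p - r = q - s
          · have hq' : q = s + (p - r) := by linarith
            subst hq'
            have hs' : s = 3*r/4 := by linarith
            subst hs'
            nlinarith [mul_pos (pow_pos hr0 3) hpr2]
          · have hu1 : (0:ℝ) ≤ 3*p-4*q := by linarith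
            have hu2 : (0:ℝ) ≤ 3*r-4*s := by linarith
            have hc1x : (0:ℝ) ≤ r-4*(p-q) := by linarith
            have hc2x : (0:ℝ) ≤ 2*s-r := by linarith
            have hc3x : (0:ℝ) ≤ s-q := by linarith
            have tstrict : 0 < q*s*s*((p-r)-(q-s))^2 :=
              mul_pos (mul_pos (mul_pos hq hs) hs) (sq_pos_of_ne' (sub_ne_zero.2 hud))
            linarith [tstrict, mul_nonneg (mul_nonneg (mul_nonneg hq.le hs.le) hu1) (sq_nonneg ((p-r)-(q-s))),
      mul_nonneg (mul_nonneg (mul_nonneg hq.le hq.le) hu1) (sq_nonneg ((p-r)-(q-s))),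
      mul_nonneg (mul_nonneg (mul_nonneg hq.le hq.le) hu2) (sq_nonneg ((p-r)-2*(q-s))),
      mul_nonneg (mul_nonneg (mul_nonneg hq.le hq.le) hc1x) (sq_nonneg (2*(p-r)-(q-s))),
      mul_nonneg (mul_nonneg (mul_nonneg hq.le hc1x) hc1x) (sq_nonneg (q-s)),
      mul_nonneg (mul_nonneg (mul_nonneg hs.le hu1) hc3x) (sq_nonneg (p-q)),
      mul_nonneg (mul_nonneg (mul_nonneg hq.le hc1x) hc1x) (sq_nonneg (p-r)),
      mul_nonneg (mul_nonneg (mul_nonneg hq.le hu1) hu2) (sq_nonneg p),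
      mul_nonneg (mul_nonneg (mul_nonneg hq.le hs.le) hs.le) (sq_nonneg ((p-r)-(q-s))),
      mul_nonneg (mul_nonneg (mul_nonneg hq.le hc1x) hc1x) (sq_nonneg p),
      mul_nonneg (mul_nonneg (mul_nonneg hq.le hq.le) hc1x) (sq_nonneg ((p-r)-(q-s))),
      mul_nonneg (mul_nonneg (mul_nonneg hq.le hu1) hu1) (sq_nonneg ((p-r)-(q-s))),
      mul_nonneg (mul_nonneg (mul_nonneg hq.le hu2) hc2x) (sq_nonneg ((p-r)-(q-s))),
      mul_nonneg (mul_nonneg (mul_nonneg hq.le hu2) hc3x) (sq_nonneg p),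
      mul_nonneg (mul_nonneg (mul_nonneg hq.le hu1) hc1x) (sq_nonneg (2*(p-r)-(q-s))),
      mul_nonneg (mul_nonneg (mul_nonneg hq.le hu1) hu2) (sq_nonneg (p-q)),
      mul_nonneg (mul_nonneg (mul_nonneg hq.le hu1) hc1x) (sq_nonneg p),
      mul_nonneg (mul_nonneg (mul_nonneg hq.le hu1) hu2) (sq_nonneg ((p-r)-2*(q-s))),
      mul_nonneg (mul_nonneg (mul_nonneg hq.le hu2) hc1x) (sq_nonneg (p-r)),
      mul_nonneg (mul_nonneg (mul_nonneg hq.le hq.le) hu2) (sq_nonneg ((p-r)-(q-s))),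
      mul_nonneg (mul_nonneg (mul_nonneg hq.le hc1x) hc1x) (sq_nonneg (p-q)),
      mul_nonneg (mul_nonneg (mul_nonneg hq.le hq.le) hq.le) (sq_nonneg ((p-r)-(q-s))),
      mul_nonneg (mul_nonneg (mul_nonneg hq.le hu2) hc1x) (sq_nonneg (p-q)),
      mul_nonneg (mul_nonneg (mul_nonneg hq.le hu2) hc2x) (sq_nonneg ((p-r)-2*(q-s))),
      mul_nonneg (mul_nonneg (mul_nonneg hq.le hs.le) hc2x) (sq_nonneg ((p-r)-(q-s))),
      mul_nonneg (mul_nonneg (mul_nonneg hq.le hu1) hc1x) (sq_nonneg (p-q))]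

private lemma stratum_bound (X Y R S M : ℝ) (hX : 2 ≤ X) (hY : 1 ≤ Y)
    (hXY : 4*Y ≤ 3*X) (hS : 0 < S) (hM : 0 < M) (hRS4 : 4*S ≤ 3*R) :
    ((3*R^2-2*R*S)/(S*M)*X - R^3/(S^2*M)*Y - R^2*(R-S)/(S*M^2)*(X-1)
      ≤ X^2*(X-Y)/(Y*(X-1))) ∧
    (X^2*(X-Y)/(Y*(X-1)) = (3*R^2-2*R*S)/(S*M)*X - R^3/(S^2*M)*Y - R^2*(R-S)/(S*M^2)*(X-1)
      ↔ (M*X/(X-1) = R ∧ M*Y/(X-1) = S)) := by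
  have hW : 0 < X - 1 := by linarith
  have hY0 : 0 < Y := by linarith
  have hR0 : 0 < R := by linarith
  have hq0 : 0 < M*Y/(X-1) := div_pos (mul_pos hM hY0) hW
  have h41 : 4*(M*Y/(X-1)) ≤ 3*(M*X/(X-1)) := by
    have hMW : (0:ℝ) < M/(X-1) := div_pos hM hW
    calc 4*(M*Y/(X-1)) = (4*Y)*(M/(X-1)) := by ring
      _ ≤ (3*X)*(M/(X-1)) := mul_le_mul_of_nonneg_right hXY hMW.le
      _ = 3*(M*X/(X-1)) := by ring
  have hE := E_nonneg (M*X/(X-1)) (M*Y/(X-1)) R S hq0 hS h41 hRS4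
  have hrel : X^2*(X-Y)*S^2*M^2 - M*S*Y*(X-1)*((3*R^2-2*R*S)*X) + M*Y^2*(X-1)*R^3
        + R^2*(R-S)*S*Y*(X-1)^2
      = ((X-1)^3/M) * ((M*X/(X-1))^3*S^2 - (M*X/(X-1))^2*(M*Y/(X-1))*S^2
        - R^2*(M*Y/(X-1))*S^2 - 3*R^2*S*(M*X/(X-1))*(M*Y/(X-1)) + R^3*(M*Y/(X-1))*S
        + 2*R*S^2*(M*X/(X-1))*(M*Y/(X-1)) + R^3*(M*Y/(X-1))^2) := by
    field_simp
    ring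
  have hPJ : 0 ≤ X^2*(X-Y)*S^2*M^2 - M*S*Y*(X-1)*((3*R^2-2*R*S)*X) + M*Y^2*(X-1)*R^3
        + R^2*(R-S)*S*Y*(X-1)^2 := by
    rw [hrel]
    exact mul_nonneg (by positivity) hE
  have hgap : X^2*(X-Y)/(Y*(X-1))
        - ((3*R^2-2*R*S)/(S*M)*X - R^3/(S^2*M)*Y - R^2*(R-S)/(S*M^2)*(X-1))
      = (X^2*(X-Y)*S^2*M^2 - M*S*Y*(X-1)*((3*R^2-2*R*S)*X) + M*Y^2*(X-1)*R^3
        + R^2*(R-S)*S*Y*(X-1)^2) / (Y*(X-1)*S^2*M^2) := by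
    field_simp
    ring
  constructor
  · rw [← sub_nonneg, hgap]
    exact div_nonneg hPJ (by positivity)
  · constructor
    · intro heq
      have h0 : X^2*(X-Y)*S^2*M^2 - M*S*Y*(X-1)*((3*R^2-2*R*S)*X) + M*Y^2*(X-1)*R^3
          + R^2*(R-S)*S*Y*(X-1)^2 = 0 := by
        have hz : (X^2*(X-Y)*S^2*M^2 - M*S*Y*(X-1)*((3*R^2-2*R*S)*X) + M*Y^2*(X-1)*R^3
            + R^2*(R-S)*S*Y*(X-1)^2) / (Y*(X-1)*S^2*M^2) = 0 := by
          rw [← hgap, heq]; ring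
        have hd : (Y*(X-1)*S^2*M^2) ≠ 0 := by positivity
        exact (div_eq_zero_iff.1 hz).resolve_right hd
      have hE0 : (M*X/(X-1))^3*S^2 - (M*X/(X-1))^2*(M*Y/(X-1))*S^2
          - R^2*(M*Y/(X-1))*S^2 - 3*R^2*S*(M*X/(X-1))*(M*Y/(X-1)) + R^3*(M*Y/(X-1))*S
          + 2*R*S^2*(M*X/(X-1))*(M*Y/(X-1)) + R^3*(M*Y/(X-1))^2 = 0 := by
        have hcoef : (X-1)^3/M ≠ 0 := ne_of_gt (by positivity)
        have := h0 ▸ hrel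
        exact (mul_eq_zero.1 this.symm).resolve_left hcoef
      by_contra hcon
      exact absurd hE0 (ne_of_gt (E_pos (M*X/(X-1)) (M*Y/(X-1)) R S hq0 hS h41 hRS4 hcon))
    · rintro ⟨hpR, hqS⟩
      have hE0 : (M*X/(X-1))^3*S^2 - (M*X/(X-1))^2*(M*Y/(X-1))*S^2
          - R^2*(M*Y/(X-1))*S^2 - 3*R^2*S*(M*X/(X-1))*(M*Y/(X-1)) + R^3*(M*Y/(X-1))*S
          + 2*R*S^2*(M*X/(X-1))*(M*Y/(X-1)) + R^3*(M*Y/(X-1))^2 = 0 := by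
        rw [hpR, hqS]; ring
      have h0 : X^2*(X-Y)*S^2*M^2 - M*S*Y*(X-1)*((3*R^2-2*R*S)*X) + M*Y^2*(X-1)*R^3
          + R^2*(R-S)*S*Y*(X-1)^2 = 0 := by rw [hrel, hE0, mul_zero]
      have := hgap
      rw [h0] at this
      simp at this
      linarith [this]

/-- **Theorem 3, case (c1).** If all strata have the same red-ball
fraction `p`, `n < N`, and `nⱼ ≤ (3/4)Nⱼ` for all `j`, then the variance of the
stratification estimator without replacement is at least
`B = ((N-n)/(N-m))·p(1-p)/n`, with equality iff `nⱼ = n/m` and `Nⱼ = N/m` for all `j`. -/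
theorem stratified_lower_bound_c1 (m : ℕ) (hm : 2 ≤ m)
    (Nj nj : Fin m → ℕ) (hNj : ∀ j, 2 ≤ Nj j)
    (N n : ℕ) (hN : N = ∑ j, Nj j) (hn : n = ∑ j, nj j) (hnN : n < N)
    (hpos : ∀ j, 1 ≤ nj j) (hc1 : ∀ j, 4 * nj j ≤ 3 * Nj j)
    (p : ℝ) (hp : p ∈ Set.Ioo (0 : ℝ) 1)
    (B : ℝ) (hB : B = (((N : ℝ) - n) / ((N : ℝ) - m)) * (p * (1 - p) / n)) :
    (∑ j, ((Nj j : ℝ) / N) ^ 2 * (p * (1 - p) / nj j) *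
        (((Nj j : ℝ) - nj j) / ((Nj j : ℝ) - 1)) ≥ B)
    ∧ (∑ j, ((Nj j : ℝ) / N) ^ 2 * (p * (1 - p) / nj j) *
          (((Nj j : ℝ) - nj j) / ((Nj j : ℝ) - 1)) = B
        ↔ ∀ j, m * nj j = n ∧ m * Nj j = N) := by
  obtain ⟨hp0, hp1⟩ := hp
  have hpp : 0 < p * (1 - p) := mul_pos hp0 (by linarith)
  -- basic numeric facts
  have hmN : 2 * m ≤ N := by
    rw [hN]
    calc 2 * m = ∑ _j : Fin m, 2 := by simp [Finset.sum_const, Finset.card_univ, mul_comm]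
      _ ≤ ∑ j, Nj j := Finset.sum_le_sum (fun j _ => hNj j)
  have hmn : m ≤ n := by
    rw [hn]
    calc m = ∑ _j : Fin m, 1 := by simp
      _ ≤ ∑ j, nj j := Finset.sum_le_sum (fun j _ => hpos j)
  have h4nN : 4 * n ≤ 3 * N := by
    rw [hN, hn, Finset.mul_sum, Finset.mul_sum]
    exact Finset.sum_le_sum (fun j _ => hc1 j)
  have hR0 : (0:ℝ) < N := by
    have : 0 < N := by omega
    exact_mod_cast this
  have hS0 : (0:ℝ) < n := by
    have : 0 < n := by omega
    exact_mod_cast this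
  have hM0 : (0:ℝ) < (N:ℝ) - m := by
    have : m < N := by omega
    have h' : (m:ℝ) < N := by exact_mod_cast this
    linarith
  have hRS4 : 4*(n:ℝ) ≤ 3*(N:ℝ) := by exact_mod_cast h4nN
  have hX2 : ∀ j, (2:ℝ) ≤ (Nj j:ℝ) := fun j => by exact_mod_cast hNj j
  have hY1 : ∀ j, (1:ℝ) ≤ (nj j:ℝ) := fun j => by exact_mod_cast hpos j
  have hXY : ∀ j, 4*(nj j:ℝ) ≤ 3*(Nj j:ℝ) := fun j => by exact_mod_cast hc1 j
  have hW : ∀ j, (0:ℝ) < (Nj j:ℝ) - 1 := fun j => by linarith [hX2 j]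
  have hY0 : ∀ j, (0:ℝ) < (nj j:ℝ) := fun j => by linarith [hY1 j]
  have hsumX : ∑ j, (Nj j : ℝ) = (N:ℝ) := by rw [hN]; push_cast; ring
  have hsumY : ∑ j, (nj j : ℝ) = (n:ℝ) := by rw [hn]; push_cast; ring
  have hsumW : ∑ j, ((Nj j:ℝ) - 1) = (N:ℝ) - m := by
    rw [Finset.sum_sub_distrib, hsumX]
    simp
  -- abbreviations
  set R := (N:ℝ) with hRdef
  set S := (n:ℝ) with hSdef
  set M := (N:ℝ) - (m:ℝ) with hMdef
  set pp := p * (1 - p) with hppdef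
  -- rewrite each summand
  have hrewrite : ∀ j, ((Nj j : ℝ) / R) ^ 2 * (pp / nj j) *
        (((Nj j : ℝ) - nj j) / ((Nj j : ℝ) - 1))
      = (pp/R^2) * ((Nj j:ℝ)^2*((Nj j:ℝ)-(nj j:ℝ))/((nj j:ℝ)*((Nj j:ℝ)-1))) := by
    intro j
    have h1 := (hW j).ne'
    have h2 := (hY0 j).ne'
    field_simp
  have hgoalsum : (∑ j, ((Nj j : ℝ) / R) ^ 2 * (pp / nj j) *
        (((Nj j : ℝ) - nj j) / ((Nj j : ℝ) - 1)))
      = ∑ j, (pp/R^2) * ((Nj j:ℝ)^2*((Nj j:ℝ)-(nj j:ℝ))/((nj j:ℝ)*((Nj j:ℝ)-1))) :=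
    Finset.sum_congr rfl (fun j _ => hrewrite j)
  -- lower-bound linear functions
  have hSB := fun j => stratum_bound (Nj j:ℝ) (nj j:ℝ) R S M (hX2 j) (hY1 j) (hXY j) hS0 hM0 hRS4
  -- the sum of the linear lower bounds equals B
  have hsumlin : ∑ j, (pp/R^2) * ((3*R^2-2*R*S)/(S*M)*(Nj j:ℝ) - R^3/(S^2*M)*(nj j:ℝ)
        - R^2*(R-S)/(S*M^2)*((Nj j:ℝ)-1)) = B := by
    rw [← Finset.mul_sum]
    have e1 : ∑ j, ((3*R^2-2*R*S)/(S*M)*(Nj j:ℝ) - R^3/(S^2*M)*(nj j:ℝ)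
          - R^2*(R-S)/(S*M^2)*((Nj j:ℝ)-1))
        = (3*R^2-2*R*S)/(S*M)*R - R^3/(S^2*M)*S - R^2*(R-S)/(S*M^2)*M := by
      rw [Finset.sum_sub_distrib, Finset.sum_sub_distrib, ← Finset.mul_sum, ← Finset.mul_sum,
        ← Finset.mul_sum, hsumX, hsumY, hsumW]
    rw [e1, hB]
    field_simp
    ring
  -- termwise inequality in rewritten form
  have hle : ∀ j ∈ Finset.univ, (pp/R^2) * ((3*R^2-2*R*S)/(S*M)*(Nj j:ℝ) - R^3/(S^2*M)*(nj j:ℝ)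
        - R^2*(R-S)/(S*M^2)*((Nj j:ℝ)-1))
      ≤ (pp/R^2) * ((Nj j:ℝ)^2*((Nj j:ℝ)-(nj j:ℝ))/((nj j:ℝ)*((Nj j:ℝ)-1))) := by
    intro j _
    exact mul_le_mul_of_nonneg_left (hSB j).1 (by positivity)
  have hppR2 : (0:ℝ) < pp/R^2 := by positivity
  -- per-j equality in ℕ form
  have hMeq : M = R - m := by rw [hMdef, hRdef]
  have hiffj : ∀ j, ((pp/R^2) * ((Nj j:ℝ)^2*((Nj j:ℝ)-(nj j:ℝ))/((nj j:ℝ)*((Nj j:ℝ)-1)))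
        = (pp/R^2) * ((3*R^2-2*R*S)/(S*M)*(Nj j:ℝ) - R^3/(S^2*M)*(nj j:ℝ)
          - R^2*(R-S)/(S*M^2)*((Nj j:ℝ)-1)))
      ↔ (m * nj j = n ∧ m * Nj j = N) := by
    intro j
    have hWne := (hW j).ne'
    constructor
    · intro h
      have h' := mul_left_cancel₀ (ne_of_gt hppR2) h
      obtain ⟨hA, hBq⟩ := (hSB j).2.1 h'
      have hA' : M*(Nj j:ℝ) = R*((Nj j:ℝ)-1) := (div_eq_iff hWne).1 hA
      have hB' : M*(nj j:ℝ) = S*((Nj j:ℝ)-1) := (div_eq_iff hWne).1 hBq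
      have hR' : R = (m:ℝ)*(Nj j:ℝ) := by
        linear_combination hA' - (Nj j:ℝ)*hMeq
      have hMX : M = (m:ℝ)*((Nj j:ℝ)-1) := by linear_combination hMeq + hR'
      have hSY : ((m:ℝ)*(nj j:ℝ))*((Nj j:ℝ)-1) = S*((Nj j:ℝ)-1) := by
        linear_combination hB' - (nj j:ℝ)*hMX
      have hS' : (m:ℝ)*(nj j:ℝ) = S := mul_right_cancel₀ hWne hSY
      constructor
      · have : ((m * nj j : ℕ) : ℝ) = ((n:ℕ):ℝ) := by push_cast; rw [← hSdef, ← hS']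
        exact_mod_cast this
      · have : ((m * Nj j : ℕ) : ℝ) = ((N:ℕ):ℝ) := by push_cast; rw [← hRdef, hR']
        exact_mod_cast this
    · rintro ⟨h1n, h2n⟩
      have hS' : S = (m:ℝ)*(nj j:ℝ) := by rw [hSdef]; exact_mod_cast h1n.symm
      have hR' : R = (m:ℝ)*(Nj j:ℝ) := by rw [hRdef]; exact_mod_cast h2n.symm
      have hMX : M = (m:ℝ)*((Nj j:ℝ)-1) := by linear_combination hMeq + hR'
      have c1 : M*(Nj j:ℝ)/((Nj j:ℝ)-1) = R := by
        rw [div_eq_iff hWne]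
        linear_combination (Nj j:ℝ)*hMX - ((Nj j:ℝ)-1)*hR'
      have c2 : M*(nj j:ℝ)/((Nj j:ℝ)-1) = S := by
        rw [div_eq_iff hWne]
        linear_combination (nj j:ℝ)*hMX - ((Nj j:ℝ)-1)*hS'
      exact congrArg (fun z => (pp/R^2) * z) ((hSB j).2.2 ⟨c1, c2⟩)
  constructor
  · rw [ge_iff_le, hgoalsum, ← hsumlin]
    exact Finset.sum_le_sum hle
  · rw [hgoalsum]
    constructor
    · intro heq
      have hall := (Finset.sum_eq_sum_iff_of_le hle).1 (hsumlin.trans heq.symm)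
      intro j
      exact (hiffj j).1 (hall j (Finset.mem_univ j)).symm
    · intro hcond
      rw [Finset.sum_congr rfl (fun j _ => (hiffj j).2 (hcond j)), hsumlin]
end

section
/- Theorem 3, case (c2): Let m ≥ 2, let N_1,…,N_m ≥ 2 be integers with N = ∑_{j=1}^m N_j, let p ∈ (0,1), let n < N, and suppose the allocation is proportional, i.e. n_j = (N_j/N)·n is a positive integer for every j with n = ∑_{j=1}^m n_j. Set B = ((N−n)/(N−m))·p(1−p)/n. Then ∑_{j=1}^m (N_j/N)² · (p(1−p)/n_j) · (N_j−n_j)/(N_j−1) ≥ B, with equality if and only if N_j = N/m (and hence n_j = n/m) for every j. -/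
open Finset

/-- **Theorem 3, case (c2).** If all strata have the same red-ball
fraction `p`, `n < N`, and the allocation is proportional, then the variance of the
stratification estimator without replacement is at least
`B = ((N-n)/(N-m))·p(1-p)/n`, with equality iff `Nⱼ = N/m` for all `j`. -/
theorem stratified_lower_bound_c2 (m : ℕ) (hm : 2 ≤ m)
    (Nj nj : Fin m → ℕ) (hNj : ∀ j, 2 ≤ Nj j)
    (N n : ℕ) (hN : N = ∑ j, Nj j) (hn : n = ∑ j, nj j) (hnN : n < N)
    (hpos : ∀ j, 1 ≤ nj j) (hprop : ∀ j, (nj j : ℝ) = ((Nj j : ℝ) / N) * n)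
    (p : ℝ) (hp : p ∈ Set.Ioo (0 : ℝ) 1)
    (B : ℝ) (hB : B = (((N : ℝ) - n) / ((N : ℝ) - m)) * (p * (1 - p) / n)) :
    (∑ j, ((Nj j : ℝ) / N) ^ 2 * (p * (1 - p) / nj j) *
        (((Nj j : ℝ) - nj j) / ((Nj j : ℝ) - 1)) ≥ B)
    ∧ (∑ j, ((Nj j : ℝ) / N) ^ 2 * (p * (1 - p) / nj j) *
          (((Nj j : ℝ) - nj j) / ((Nj j : ℝ) - 1)) = B
        ↔ ∀ j, m * Nj j = N) := by
  obtain ⟨hp0, hp1⟩ := hp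
  have hp1' : (0:ℝ) < 1 - p := by linarith
  -- basic numeric facts
  have hmN : 2 * m ≤ N := by
    rw [hN]
    calc 2 * m = ∑ _j : Fin m, 2 := by
          simp [Finset.sum_const, Finset.card_univ, mul_comm]
      _ ≤ ∑ j, Nj j := Finset.sum_le_sum fun j _ => hNj j
  have hmn : m ≤ n := by
    rw [hn]
    calc m = ∑ _j : Fin m, 1 := by simp
      _ ≤ ∑ j, nj j := Finset.sum_le_sum fun j _ => hpos j
  have hnpos : 0 < n := by omega
  have hNpos : 0 < N := by omega
  have hmNlt : m < N := by omega
  have hnr : (0:ℝ) < n := by exact_mod_cast hnpos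
  have hNr : (0:ℝ) < N := by exact_mod_cast hNpos
  have hNm : (0:ℝ) < (N:ℝ) - m := by
    have : (m:ℝ) < N := by exact_mod_cast hmNlt
    linarith
  have hNn : (0:ℝ) < (N:ℝ) - n := by
    have : (n:ℝ) < N := by exact_mod_cast hnN
    linarith
  have haj : ∀ j, (0:ℝ) < (Nj j:ℝ) - 1 := by
    intro j
    have : (2:ℝ) ≤ (Nj j:ℝ) := by exact_mod_cast hNj j
    linarith
  have hnjr : ∀ j, (0:ℝ) < (nj j:ℝ) := by
    intro j; exact_mod_cast hpos j
  have hmr : (0:ℝ) < m := by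
    have : (2:ℝ) ≤ m := by exact_mod_cast hm
    linarith
  have hNcast : (N:ℝ) = ∑ j, (Nj j:ℝ) := by rw [hN]; push_cast; rfl
  set C : ℝ := p * (1 - p) * ((N:ℝ) - n) / (n * (N:ℝ)^2) with hCdef
  have hC : 0 < C := by positivity
  set T : ℝ := (N:ℝ) / ((N:ℝ) - m) with hTdef
  set D : Fin m → ℝ := fun j => ((Nj j:ℝ) - 1) * ((Nj j:ℝ)/((Nj j:ℝ) - 1) - T)^2
    with hDdef
  -- each term of the sum equals C * Nj^2/(Nj-1)
  have hterm : ∀ j, ((Nj j : ℝ) / N) ^ 2 * (p * (1 - p) / nj j) *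
      (((Nj j : ℝ) - nj j) / ((Nj j : ℝ) - 1))
      = C * ((Nj j:ℝ)^2 / ((Nj j:ℝ) - 1)) := by
    intro j
    have h1 : ((Nj j:ℝ) - 1) ≠ 0 := (haj j).ne'
    have h2 : (N:ℝ) ≠ 0 := hNr.ne'
    have h3 : (n:ℝ) ≠ 0 := hnr.ne'
    have h4 : (Nj j:ℝ) ≠ 0 := by have := haj j; intro h; rw [h] at this; linarith
    rw [hprop j, hCdef]
    field_simp
  have hsum : (∑ j, ((Nj j : ℝ) / N) ^ 2 * (p * (1 - p) / nj j) *
        (((Nj j : ℝ) - nj j) / ((Nj j : ℝ) - 1)))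
      = C * ∑ j, (Nj j:ℝ)^2 / ((Nj j:ℝ) - 1) := by
    rw [Finset.mul_sum]
    exact Finset.sum_congr rfl fun j _ => hterm j
  -- decomposition of each quadratic term
  have hterm2 : ∀ j, (Nj j:ℝ)^2 / ((Nj j:ℝ) - 1)
      = D j + (2*T*(Nj j:ℝ) - T^2*((Nj j:ℝ) - 1)) := by
    intro j
    have h1 : ((Nj j:ℝ) - 1) ≠ 0 := (haj j).ne'
    simp only [hDdef]
    field_simp
    ring
  have hlin : ∑ j, (2*T*(Nj j:ℝ) - T^2*((Nj j:ℝ) - 1))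
      = 2*T*(N:ℝ) - T^2*((N:ℝ) - m) := by
    rw [Finset.sum_sub_distrib, ← Finset.mul_sum, ← Finset.mul_sum,
      Finset.sum_sub_distrib, Finset.sum_const, Finset.card_univ,
      Fintype.card_fin, ← hNcast]
    ring
  have hTval : 2*T*(N:ℝ) - T^2*((N:ℝ) - m) = (N:ℝ)^2 / ((N:ℝ) - m) := by
    rw [hTdef]
    field_simp
    ring
  have hsplit : (∑ j, (Nj j:ℝ)^2 / ((Nj j:ℝ) - 1))
      = (N:ℝ)^2 / ((N:ℝ) - m) + ∑ j, D j := by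
    calc (∑ j, (Nj j:ℝ)^2 / ((Nj j:ℝ) - 1))
        = ∑ j, (D j + (2*T*(Nj j:ℝ) - T^2*((Nj j:ℝ) - 1))) :=
          Finset.sum_congr rfl fun j _ => hterm2 j
      _ = (∑ j, D j) + ∑ j, (2*T*(Nj j:ℝ) - T^2*((Nj j:ℝ) - 1)) :=
          Finset.sum_add_distrib
      _ = (N:ℝ)^2 / ((N:ℝ) - m) + ∑ j, D j := by rw [hlin, hTval]; ring
  have hBC : B = C * ((N:ℝ)^2 / ((N:ℝ) - m)) := by
    rw [hB, hCdef]
    field_simp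
  have hmain : (∑ j, ((Nj j : ℝ) / N) ^ 2 * (p * (1 - p) / nj j) *
        (((Nj j : ℝ) - nj j) / ((Nj j : ℝ) - 1)))
      = B + C * ∑ j, D j := by
    rw [hsum, hsplit, hBC, mul_add]
  have hDnonneg : ∀ j ∈ Finset.univ, (0:ℝ) ≤ D j := by
    intro j _
    exact mul_nonneg (haj j).le (sq_nonneg _)
  have hDsum : (0:ℝ) ≤ ∑ j, D j := Finset.sum_nonneg hDnonneg
  constructor
  · rw [hmain]
    nlinarith [mul_nonneg hC.le hDsum]
  · rw [hmain]
    constructor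
    · intro h
      have hsum0 : (∑ j, D j) = 0 := by
        have : C * ∑ j, D j = 0 := by linarith
        rcases mul_eq_zero.mp this with h' | h'
        · exact absurd h' hC.ne'
        · exact h'
      have hD0 : ∀ j ∈ Finset.univ, D j = 0 :=
        (Finset.sum_eq_zero_iff_of_nonneg hDnonneg).mp hsum0
      intro j
      have hj : D j = 0 := hD0 j (Finset.mem_univ j)
      have h1 : ((Nj j:ℝ) - 1) ≠ 0 := (haj j).ne'
      have hsq : ((Nj j:ℝ)/((Nj j:ℝ) - 1) - T)^2 = 0 := by
        rcases mul_eq_zero.mp hj with h' | h'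
        · exact absurd h' h1
        · exact h'
      have heq : (Nj j:ℝ)/((Nj j:ℝ) - 1) = T := by
        have := pow_eq_zero_iff (n := 2) (by norm_num) |>.mp hsq
        linarith
      rw [hTdef, div_eq_div_iff h1 hNm.ne'] at heq
      have : (m:ℝ) * (Nj j:ℝ) = (N:ℝ) := by linear_combination -heq
      exact_mod_cast this
    · intro h
      have hD0 : ∀ j, D j = 0 := by
        intro j
        have hj : (m:ℝ) * (Nj j:ℝ) = (N:ℝ) := by exact_mod_cast h j
        have h1 : ((Nj j:ℝ) - 1) ≠ 0 := (haj j).ne'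
        have hdiff : (Nj j:ℝ)/((Nj j:ℝ) - 1) - T = 0 := by
          rw [hTdef, sub_eq_zero, div_eq_div_iff h1 hNm.ne']
          linear_combination -hj
        simp only [hDdef, hdiff]
        ring
      have : (∑ j, D j) = 0 := Finset.sum_eq_zero fun j _ => hD0 j
      rw [this, mul_zero, add_zero]
end

section
/- Theorem 3, case (c3): Let m ≥ 2, suppose N_1 = N_2 = … = N_m = N/m ≥ 2, let p ∈ (0,1), and let (n_1,…,n_m) be integers with 1 ≤ n_j ≤ N/m and n = ∑_{j=1}^m n_j < N. Set B = ((N−n)/(N−m))·p(1−p)/n. Then ∑_{j=1}^m (1/m²) · (p(1−p)/n_j) · (N/m − n_j)/(N/m − 1) ≥ B, with equality if and only if n_j = n/m for every j. -/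
open Finset

lemma amhm_aux (m : ℕ) (a : Fin m → ℝ) (ha : ∀ j, 0 < a j) :
    ((m:ℝ)^2 ≤ (∑ j, a j) * (∑ j, (a j)⁻¹)) ∧
    ((∑ j, a j) * (∑ j, (a j)⁻¹) = (m:ℝ)^2 ↔ ∀ i j, a i = a j) := by
  have hne : ∀ j, a j ≠ 0 := fun j => (ha j).ne'
  have h1 : ∀ i j : Fin m, (a i - a j)^2/(a i * a j)
      = a i * (a j)⁻¹ + a j * (a i)⁻¹ - 2 := by
    intro i j
    rw [← div_eq_mul_inv, ← div_eq_mul_inv]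
    field_simp [hne i, hne j]
    ring
  have hid : ∑ i, ∑ j, (a i - a j)^2/(a i * a j)
      = 2 * ((∑ j, a j) * (∑ j, (a j)⁻¹) - (m:ℝ)^2) := by
    simp only [h1]
    simp only [Finset.sum_sub_distrib, Finset.sum_add_distrib, ← Finset.mul_sum,
      ← Finset.sum_mul, Finset.sum_const, Finset.card_univ, Fintype.card_fin,
      nsmul_eq_mul]
    ring
  have hterm : ∀ i j : Fin m, 0 ≤ (a i - a j)^2/(a i * a j) := by
    intro i j
    exact div_nonneg (sq_nonneg _) (mul_pos (ha i) (ha j)).le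
  have hsumnn : 0 ≤ ∑ i, ∑ j, (a i - a j)^2/(a i * a j) :=
    Finset.sum_nonneg fun i _ => Finset.sum_nonneg fun j _ => hterm i j
  constructor
  · nlinarith [hid, hsumnn]
  · constructor
    · intro h
      have hz : ∑ i, ∑ j, (a i - a j)^2/(a i * a j) = 0 := by rw [hid, h]; ring
      have hz1 := (Finset.sum_eq_zero_iff_of_nonneg (fun i _ =>
        Finset.sum_nonneg fun j _ => hterm i j)).mp hz
      intro i j
      have hz2 := (Finset.sum_eq_zero_iff_of_nonneg (fun j _ =>
        hterm i j)).mp (hz1 i (Finset.mem_univ i)) j (Finset.mem_univ j)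
      have hnum : (a i - a j)^2 = 0 := by
        rcases div_eq_zero_iff.mp hz2 with h | h
        · exact h
        · exact absurd h (mul_ne_zero (hne i) (hne j))
      have := pow_eq_zero_iff (n := 2) (by norm_num) |>.mp hnum
      linarith [sub_eq_zero.mp this]
    · intro h
      rcases Nat.eq_zero_or_pos m with hm0 | hm0
      · subst hm0; simp
      · obtain ⟨i0⟩ : Nonempty (Fin m) := ⟨⟨0, hm0⟩⟩
        have hsa : ∑ j, a j = m * a i0 := by
          rw [Finset.sum_congr rfl fun j _ => h j i0]
          simp [Finset.card_univ]
        have hsi : ∑ j, (a j)⁻¹ = m * (a i0)⁻¹ := by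
          rw [Finset.sum_congr rfl fun j _ => by rw [h j i0]]
          simp [Finset.card_univ]
        rw [hsa, hsi, mul_mul_mul_comm, mul_inv_cancel₀ (hne i0)]
        ring

/-- **Theorem 3, case (c3).** If all strata have equal size
`N/m = q ≥ 2`, all with the same red-ball fraction `p`, and `n < N`, then the
variance of the stratification estimator without replacement is at least
`B = ((N-n)/(N-m))·p(1-p)/n`, with equality iff `nⱼ = n/m` for all `j`. -/
theorem stratified_lower_bound_c3 (m : ℕ) (hm : 2 ≤ m)
    (q : ℕ) (hq : 2 ≤ q) (N : ℕ) (hNq : N = m * q)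
    (nj : Fin m → ℕ) (n : ℕ) (hn : n = ∑ j, nj j) (hnN : n < N)
    (halloc : ∀ j, 1 ≤ nj j ∧ nj j ≤ q)
    (p : ℝ) (hp : p ∈ Set.Ioo (0 : ℝ) 1)
    (B : ℝ) (hB : B = (((N : ℝ) - n) / ((N : ℝ) - m)) * (p * (1 - p) / n)) :
    (∑ j, (1 / (m : ℝ) ^ 2) * (p * (1 - p) / nj j) *
        (((q : ℝ) - nj j) / ((q : ℝ) - 1)) ≥ B)
    ∧ (∑ j, (1 / (m : ℝ) ^ 2) * (p * (1 - p) / nj j) *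
          (((q : ℝ) - nj j) / ((q : ℝ) - 1)) = B
        ↔ ∀ j, m * nj j = n) := by
  obtain ⟨hp0, hp1⟩ := hp
  have hc : 0 < p * (1 - p) := mul_pos hp0 (by linarith)
  set a : Fin m → ℝ := fun j => (nj j : ℝ) with ha_def
  have ha : ∀ j, 0 < a j := fun j => by
    have := (halloc j).1
    simpa [ha_def] using (Nat.cast_pos (α := ℝ)).mpr (lt_of_lt_of_le Nat.zero_lt_one this)
  have hane : ∀ j, a j ≠ 0 := fun j => (ha j).ne'
  have hmpos : (0:ℝ) < m := by positivity
  have hq1 : (0:ℝ) < (q:ℝ) - 1 := by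
    have : (2:ℝ) ≤ q := by exact_mod_cast hq
    linarith
  have hnm : m ≤ n := by
    rw [hn]
    calc m = ∑ _j : Fin m, 1 := by simp
    _ ≤ ∑ j, nj j := Finset.sum_le_sum fun j _ => (halloc j).1
  have hnpos : (0:ℝ) < n := by
    have : 0 < n := lt_of_lt_of_le (by omega) hnm
    exact_mod_cast this
  have hnne : (n:ℝ) ≠ 0 := hnpos.ne'
  have hS : ∑ j, a j = (n:ℝ) := by
    rw [hn]; push_cast [ha_def]; rfl
  set T := ∑ j, (a j)⁻¹ with hT
  obtain ⟨hge, heq⟩ := amhm_aux m a ha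
  rw [hS] at hge heq
  -- rewrite LHS
  have hLHS : ∑ j, (1 / (m : ℝ) ^ 2) * (p * (1 - p) / nj j) *
        (((q : ℝ) - nj j) / ((q : ℝ) - 1))
      = ∑ j, (p * (1-p) / (m^2 * ((q:ℝ)-1)) * ((q:ℝ) * (a j)⁻¹)
          - p * (1-p) / (m^2 * ((q:ℝ)-1))) := by
    refine Finset.sum_congr rfl fun j _ => ?_
    have := hane j
    show _ = p * (1-p) / (m^2 * ((q:ℝ)-1)) * ((q:ℝ) * (a j)⁻¹)
          - p * (1-p) / (m^2 * ((q:ℝ)-1))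
    rw [ha_def]
    field_simp
    rw [sub_div, div_self (show (nj j : ℝ) ≠ 0 from this)]
  have hLHS2 : ∑ j, (1 / (m : ℝ) ^ 2) * (p * (1 - p) / nj j) *
        (((q : ℝ) - nj j) / ((q : ℝ) - 1))
      = p * (1-p) / (m^2 * ((q:ℝ)-1)) * ((q:ℝ) * T) - m * (p * (1-p) / (m^2 * ((q:ℝ)-1))) := by
    rw [hLHS, Finset.sum_sub_distrib, Finset.sum_const, Finset.card_univ, Fintype.card_fin,
      nsmul_eq_mul, hT, Finset.mul_sum, Finset.mul_sum]
  -- key identity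
  have hkey : ∑ j, (1 / (m : ℝ) ^ 2) * (p * (1 - p) / nj j) *
        (((q : ℝ) - nj j) / ((q : ℝ) - 1))
      = B + (p * (1-p) * q / (m^2 * n * ((q:ℝ)-1))) * ((n:ℝ) * T - (m:ℝ)^2) := by
    rw [hLHS2, hB, hNq]
    have hmne : (m:ℝ) ≠ 0 := hmpos.ne'
    have hq1ne : ((q:ℝ) - 1) ≠ 0 := hq1.ne'
    have hNm : ((m*q : ℕ) : ℝ) - (m:ℝ) = m * ((q:ℝ) - 1) := by push_cast; ring
    have hNmne : (m:ℝ) * q - m ≠ 0 := by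
      have : (m:ℝ) * q - m = m * ((q:ℝ) - 1) := by ring
      rw [this]; positivity
    push_cast
    field_simp [hNmne]
    ring
  have hK : 0 < p * (1-p) * q / (m^2 * n * ((q:ℝ)-1)) := by positivity
  have hd : 0 ≤ (n:ℝ) * T - (m:ℝ)^2 := by linarith
  constructor
  · rw [hkey]
    nlinarith
  · rw [hkey]
    constructor
    · intro h
      have h0 : (p * (1-p) * q / (m^2 * n * ((q:ℝ)-1))) * ((n:ℝ) * T - (m:ℝ)^2) = 0 := by
        linarith
      have h1 : (n:ℝ) * T - (m:ℝ)^2 = 0 := by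
        rcases mul_eq_zero.mp h0 with h | h
        · exact absurd h hK.ne'
        · exact h
      have h2 : (n:ℝ) * T = (m:ℝ)^2 := by linarith
      have hall := heq.mp h2
      intro j
      have hsum : n = ∑ i, nj i := hn
      have hval : ∀ i, nj i = nj j := fun i => Nat.cast_injective (hall i j)
      rw [hsum, Finset.sum_congr rfl fun i _ => hval i]
      simp [Finset.card_univ, Nat.mul_comm]
    · intro h
      have hall : ∀ i j, a i = a j := by
        intro i j
        have : m * nj i = m * nj j := by rw [h i, h j]
        have := Nat.eq_of_mul_eq_mul_left (by omega) this
        simp [ha_def, this]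
      have := heq.mpr hall
      rw [this]
      ring
end

section
/- Theorem 4: Let m ≥ 2, suppose N_j = N/m ≥ 2 and n_j = n/m ≥ 1 are integers for all j, with n < N. Let p_1,…,p_m ∈ [0,1] satisfy (1/m)·∑_{j=1}^m p_j = p. Set B = ((N−n)/(N−m))·p(1−p)/n. Then ∑_{j=1}^m (1/m²) · (p_j(1−p_j)/(n/m)) · (N/m − n/m)/(N/m − 1) ≤ B, with equality if and only if p_1 = p_2 = … = p_m (= p). -/
open Finset

/-- **Theorem 4.** With `m` strata of equal size `N/m = q ≥ 2`, equal
sample sizes `n/m = s ≥ 1`, `n < N`, and red-ball fractions `pⱼ ∈ [0,1]` averaging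
to `p`, the variance of the stratification estimator without replacement is at most
`B = ((N-n)/(N-m))·p(1-p)/n`, with equality iff all the `pⱼ` are equal. -/
theorem stratified_upper_bound_equal_strata (m : ℕ) (hm : 2 ≤ m)
    (q : ℕ) (hq : 2 ≤ q) (N : ℕ) (hNq : N = m * q)
    (s : ℕ) (hs : 1 ≤ s) (n : ℕ) (hns : n = m * s) (hsq : s ≤ q) (hnN : n < N)
    (pj : Fin m → ℝ) (hpj : ∀ j, pj j ∈ Set.Icc (0 : ℝ) 1)
    (p : ℝ) (hp : (1 / (m : ℝ)) * ∑ j, pj j = p)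
    (B : ℝ) (hB : B = (((N : ℝ) - n) / ((N : ℝ) - m)) * (p * (1 - p) / n)) :
    (∑ j, (1 / (m : ℝ) ^ 2) * (pj j * (1 - pj j) / s) *
        (((q : ℝ) - s) / ((q : ℝ) - 1)) ≤ B)
    ∧ (∑ j, (1 / (m : ℝ) ^ 2) * (pj j * (1 - pj j) / s) *
          (((q : ℝ) - s) / ((q : ℝ) - 1)) = B
        ↔ ∀ i j, pj i = pj j) := by
  have hmr : (2 : ℝ) ≤ (m : ℝ) := by exact_mod_cast hm
  have hqr : (2 : ℝ) ≤ (q : ℝ) := by exact_mod_cast hq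
  have hsr : (1 : ℝ) ≤ (s : ℝ) := by exact_mod_cast hs
  have hslq : s < q := by
    rw [hNq, hns] at hnN
    exact lt_of_mul_lt_mul_left hnN (Nat.zero_le m)
  have hqsr : (1 : ℝ) ≤ (q : ℝ) - (s : ℝ) := by
    have : (s : ℝ) + 1 ≤ (q : ℝ) := by exact_mod_cast hslq
    linarith
  have hm0 : (0 : ℝ) < (m : ℝ) := by linarith
  have hs0 : (0 : ℝ) < (s : ℝ) := by linarith
  have hq1 : (0 : ℝ) < (q : ℝ) - 1 := by linarith
  set c : ℝ := ((q : ℝ) - s) / (((q : ℝ) - 1) * s * (m : ℝ) ^ 2) with hc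
  have hc0 : 0 < c := by
    apply div_pos (by linarith)
    positivity
  have hS : ∑ j, pj j = (m : ℝ) * p := by
    field_simp at hp; linarith [hp]
  -- rewrite LHS
  have hL : (∑ j, (1 / (m : ℝ) ^ 2) * (pj j * (1 - pj j) / s) *
      (((q : ℝ) - s) / ((q : ℝ) - 1))) = c * ∑ j, pj j * (1 - pj j) := by
    rw [Finset.mul_sum]
    refine Finset.sum_congr rfl fun j _ => ?_
    rw [hc]
    field_simp
  -- rewrite B
  have hB' : B = c * ((m : ℝ) * (p * (1 - p))) := by
    rw [hB, hNq, hns, hc]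
    push_cast
    have h1 : (m : ℝ) * q - m = m * ((q : ℝ) - 1) := by ring
    have h2 : (m : ℝ) * q - m * s = m * ((q : ℝ) - s) := by ring
    rw [h1, h2]
    field_simp
  -- key identity
  have hkey : ∑ j, (pj j - p) ^ 2 = (m : ℝ) * (p * (1 - p)) - ∑ j, pj j * (1 - pj j) := by
    have h1 : ∑ j, ((pj j - p) ^ 2 + pj j * (1 - pj j)) =
        ∑ j, ((1 - 2 * p) * pj j + p ^ 2) := by
      refine Finset.sum_congr rfl fun j _ => by ring
    rw [Finset.sum_add_distrib] at h1
    rw [Finset.sum_add_distrib, ← Finset.mul_sum, Finset.sum_const, card_univ,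
      Fintype.card_fin, nsmul_eq_mul, hS] at h1
    linarith
  have hsqnn : 0 ≤ ∑ j, (pj j - p) ^ 2 :=
    Finset.sum_nonneg fun j _ => sq_nonneg _
  have hineq : ∑ j, pj j * (1 - pj j) ≤ (m : ℝ) * (p * (1 - p)) := by linarith
  constructor
  · rw [hL, hB']
    exact mul_le_mul_of_nonneg_left hineq hc0.le
  · rw [hL, hB']
    constructor
    · intro heq
      have h2 : ∑ j, pj j * (1 - pj j) = (m : ℝ) * (p * (1 - p)) :=
        mul_left_cancel₀ hc0.ne' heq
      have h3 : ∑ j, (pj j - p) ^ 2 = 0 := by linarith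
      have h4 : ∀ j ∈ Finset.univ, (pj j - p) ^ 2 = 0 :=
        (Finset.sum_eq_zero_iff_of_nonneg fun j _ => sq_nonneg _).mp h3
      intro i j
      have hi := pow_eq_zero_iff (n := 2) (by norm_num) |>.mp (h4 i (mem_univ i))
      have hj := pow_eq_zero_iff (n := 2) (by norm_num) |>.mp (h4 j (mem_univ j))
      have : pj i = p := by linarith
      have : pj j = p := by linarith
      linarith
    · intro hall
      have hpe : ∀ j, pj j = p := by
        intro j
        have : ∑ i, pj i = (m : ℝ) * pj j := by
          rw [Finset.sum_congr rfl fun i _ => hall i j, Finset.sum_const, card_univ,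
            Fintype.card_fin, nsmul_eq_mul]
        rw [hS] at this
        have := mul_left_cancel₀ hm0.ne' this
        linarith
      have h5 : ∀ j ∈ Finset.univ, pj j * (1 - pj j) = p * (1 - p) :=
        fun j _ => by rw [hpe j]
      rw [Finset.sum_congr rfl h5, Finset.sum_const, card_univ, Fintype.card_fin,
        nsmul_eq_mul]
end

section
/- Let m ≥ 2 and n, N be positive integers with n + m ≤ N, and let p ∈ (0,1). Then ((N−m−n)/(N−m))·p(1−p)/(n+m) ≤ ((N−n)/(N−1))·p(1−p)/n. That is, in the situation of Theorem 4, if for every stratum the sample size is increased by 1, the new bound B_new = ((N−(n+m))/(N−m))·p(1−p)/(n+m) on the variance of the stratification estimator without replacement does not exceed the simple-random-sample (without replacement) variance ((N−n)/(N−1))·p(1−p)/n corresponding to the old sample size n. -/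
/-- Increasing every stratum's sample size by one: the new bound
`B_new = ((N-m-n)/(N-m))·p(1-p)/(n+m)` does not exceed the without-replacement
simple-random-sample variance `((N-n)/(N-1))·p(1-p)/n` at the old sample size. -/
theorem increased_sample_bound (m n N : ℕ) (hm : 2 ≤ m) (hn : 1 ≤ n) (hN : 1 ≤ N)
    (hnmN : n + m ≤ N) (p : ℝ) (hp : p ∈ Set.Ioo (0 : ℝ) 1) :
    (((N : ℝ) - m - n) / ((N : ℝ) - m)) * (p * (1 - p) / ((n : ℝ) + m))
      ≤ (((N : ℝ) - n) / ((N : ℝ) - 1)) * (p * (1 - p) / n) := by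
  obtain ⟨hp0, hp1⟩ := hp
  have hq : 0 < p * (1 - p) := by nlinarith
  have hmn : m + 1 ≤ N := le_trans (by omega) hnmN
  have hm' : (2:ℝ) ≤ m := by exact_mod_cast hm
  have hn' : (1:ℝ) ≤ n := by exact_mod_cast hn
  have hNnm : ((n:ℝ) + m) ≤ N := by exact_mod_cast hnmN
  have hNm : (0:ℝ) < (N:ℝ) - m := by
    have : ((m:ℝ) + 1) ≤ N := by exact_mod_cast hmn
    linarith
  have hN1 : (0:ℝ) < (N:ℝ) - 1 := by linarith
  rw [div_mul_div_comm, div_mul_div_comm,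
    div_le_div_iff₀ (by positivity) (by positivity)]
  have hNr : (0:ℝ) ≤ N := by positivity
  have h1 : (0:ℝ) ≤ p*(1-p) * ((m:ℝ) * ((N:ℝ) * ((N:ℝ)-((n:ℝ)+m)))) := by
    apply mul_nonneg hq.le
    apply mul_nonneg (by positivity)
    exact mul_nonneg hNr (by linarith)
  have h2 : (0:ℝ) ≤ p*(1-p) * ((n:ℝ) * (N:ℝ)) := by positivity
  have h3 : (0:ℝ) ≤ p*(1-p) * ((n:ℝ) * (((m:ℝ)+n) * ((m:ℝ)-1))) := by
    apply mul_nonneg hq.le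
    apply mul_nonneg (by positivity)
    apply mul_nonneg (by positivity) (by linarith)
  nlinarith [h1, h2, h3]
end

section
/- Part of Theorem 5 (upper bound under proportional allocation): Let m ≥ 2, let N_1,…,N_m ≥ 2 be integers with N = ∑_{j=1}^m N_j and n < N, suppose n_j = (N_j/N)·n is a positive integer for every j, and let p ∈ (0,1). Then for all p_1,…,p_m ∈ [0,1] with ∑_{j=1}^m p_j N_j = pN, ∑_{j=1}^m (N_j/N)² · (p_j(1−p_j)/n_j) · (N_j−n_j)/(N_j−1) ≤ ((N−n)/(4(N−m)n)) · ( ((N−m)/N²)·∑_{j=1}^m N_j²/(N_j−1) − (2p−1)² ) = B + ((N−n)/(4(N−m)nN²))·∑_{j=1}^m (N−mN_j)/(N_j−1), where B = ((N−n)/(N−m))·p(1−p)/n. -/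
open Finset

/-- **part of Theorem 5.** Under proportional allocation, for every
distribution `(p₁,…,pₘ)` of the red balls over the strata, the variance of the
stratification estimator without replacement is at most
`((N-n)/(4(N-m)n))·(((N-m)/N²)·∑ⱼ Nⱼ²/(Nⱼ-1) - (2p-1)²)`, which equals
`B + ((N-n)/(4(N-m)nN²))·∑ⱼ (N-mNⱼ)/(Nⱼ-1)` with `B = ((N-n)/(N-m))·p(1-p)/n`. -/
theorem stratified_variance_upper_bound_proportional (m : ℕ) (hm : 2 ≤ m)
    (Nj : Fin m → ℕ) (hNj : ∀ j, 2 ≤ Nj j) (N : ℕ) (hN : N = ∑ j, Nj j)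
    (nj : Fin m → ℕ) (n : ℕ) (hn : n = ∑ j, nj j) (hnN : n < N)
    (hpos : ∀ j, 1 ≤ nj j) (hprop : ∀ j, (nj j : ℝ) = ((Nj j : ℝ) / N) * n)
    (p : ℝ) (hp : p ∈ Set.Ioo (0 : ℝ) 1)
    (B : ℝ) (hB : B = (((N : ℝ) - n) / ((N : ℝ) - m)) * (p * (1 - p) / n)) :
    (∀ pj : Fin m → ℝ, (∀ j, pj j ∈ Set.Icc (0 : ℝ) 1) →
        (∑ j, pj j * Nj j = p * N) →
        ∑ j, ((Nj j : ℝ) / N) ^ 2 * (pj j * (1 - pj j) / nj j) *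
            (((Nj j : ℝ) - nj j) / ((Nj j : ℝ) - 1))
          ≤ (((N : ℝ) - n) / (4 * ((N : ℝ) - m) * n)) *
              ((((N : ℝ) - m) / (N : ℝ) ^ 2) * (∑ j, (Nj j : ℝ) ^ 2 / ((Nj j : ℝ) - 1))
                - (2 * p - 1) ^ 2))
    ∧ (((N : ℝ) - n) / (4 * ((N : ℝ) - m) * n)) *
          ((((N : ℝ) - m) / (N : ℝ) ^ 2) * (∑ j, (Nj j : ℝ) ^ 2 / ((Nj j : ℝ) - 1))
            - (2 * p - 1) ^ 2)
        = B + (((N : ℝ) - n) / (4 * ((N : ℝ) - m) * n * (N : ℝ) ^ 2)) *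
            ∑ j, (((N : ℝ) - m * Nj j) / ((Nj j : ℝ) - 1)) := by
  -- basic numeric facts
  have hNjR : ∀ j, (2 : ℝ) ≤ (Nj j : ℝ) := fun j => by exact_mod_cast hNj j
  have hNj1 : ∀ j, (0 : ℝ) < (Nj j : ℝ) - 1 := fun j => by linarith [hNjR j]
  have h2m : 2 * m ≤ N := by
    rw [hN]
    calc 2 * m = ∑ _j : Fin m, 2 := by simp [mul_comm]
    _ ≤ ∑ j, Nj j := Finset.sum_le_sum fun j _ => hNj j
  have hmn : m ≤ n := by
    rw [hn]
    calc m = ∑ _j : Fin m, 1 := by simp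
    _ ≤ ∑ j, nj j := Finset.sum_le_sum fun j _ => hpos j
  have hmN : (m : ℝ) < N := by
    have : m < N := lt_of_lt_of_le (by omega) h2m
    exact_mod_cast this
  have hNm : (0 : ℝ) < (N : ℝ) - m := by linarith
  have hnpos : (0 : ℝ) < (n : ℝ) := by
    have : 0 < n := lt_of_lt_of_le (by omega) hmn
    exact_mod_cast this
  have hNpos : (0 : ℝ) < (N : ℝ) := by linarith
  have hNn : (0 : ℝ) < (N : ℝ) - n := by
    have : (n : ℝ) < N := by exact_mod_cast hnN
    linarith
  have hsumN : ∑ j, (Nj j : ℝ) = (N : ℝ) := by rw [hN]; push_cast; ring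
  have hsum1 : ∑ j, ((Nj j : ℝ) - 1) = (N : ℝ) - m := by
    rw [Finset.sum_sub_distrib, hsumN]; simp
  -- the key algebraic identity for part 2
  have key : ((N : ℝ) - m) * (∑ j, (Nj j : ℝ) ^ 2 / ((Nj j : ℝ) - 1))
      - ∑ j, (((N : ℝ) - m * Nj j) / ((Nj j : ℝ) - 1)) = (N : ℝ) ^ 2 := by
    rw [Finset.mul_sum, ← Finset.sum_sub_distrib]
    have : ∀ j ∈ (univ : Finset (Fin m)),
        ((N : ℝ) - m) * ((Nj j : ℝ) ^ 2 / ((Nj j : ℝ) - 1))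
          - ((N : ℝ) - m * Nj j) / ((Nj j : ℝ) - 1)
        = (N : ℝ) * ((Nj j : ℝ) + 1) - m * Nj j := by
      intro j _
      have := (hNj1 j).ne'
      field_simp
      ring
    rw [Finset.sum_congr rfl this, Finset.sum_sub_distrib, ← Finset.mul_sum, ← Finset.mul_sum,
      Finset.sum_add_distrib, hsumN]
    simp
    ring
  constructor
  · -- the inequality
    intro pj hpj hsum
    have hterm : ∀ j ∈ (univ : Finset (Fin m)),
        ((Nj j : ℝ) / N) ^ 2 * (pj j * (1 - pj j) / nj j) *
            (((Nj j : ℝ) - nj j) / ((Nj j : ℝ) - 1))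
        = (((N : ℝ) - n) / ((N : ℝ) ^ 2 * n)) *
            ((Nj j : ℝ) ^ 2 / ((Nj j : ℝ) - 1) * (pj j * (1 - pj j))) := by
      intro j _
      have h1 := (hNj1 j).ne'
      have h2 : (Nj j : ℝ) ≠ 0 := by have := hNjR j; linarith
      rw [hprop j]
      field_simp
    rw [Finset.sum_congr rfl hterm, ← Finset.mul_sum]
    -- Cauchy-Schwarz
    have cs : ((N : ℝ) * (2 * p - 1)) ^ 2 / ((N : ℝ) - m)
        ≤ ∑ j, (Nj j : ℝ) ^ 2 * (2 * pj j - 1) ^ 2 / ((Nj j : ℝ) - 1) := by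
      have := sq_sum_div_le_sum_sq_div (univ : Finset (Fin m))
        (fun j => (Nj j : ℝ) * (2 * pj j - 1)) (g := fun j => (Nj j : ℝ) - 1)
        (fun j _ => hNj1 j)
      have e1 : ∑ j, (Nj j : ℝ) * (2 * pj j - 1) = (N : ℝ) * (2 * p - 1) := by
        have : ∑ j, (Nj j : ℝ) * (2 * pj j - 1)
            = 2 * (∑ j, pj j * Nj j) - ∑ j, (Nj j : ℝ) := by
          rw [Finset.mul_sum, ← Finset.sum_sub_distrib]
          exact Finset.sum_congr rfl fun j _ => by ring
        rw [this, hsum, hsumN]; ring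
      have e2 : ∀ j ∈ (univ : Finset (Fin m)),
          ((Nj j : ℝ) * (2 * pj j - 1)) ^ 2 / ((Nj j : ℝ) - 1)
          = (Nj j : ℝ) ^ 2 * (2 * pj j - 1) ^ 2 / ((Nj j : ℝ) - 1) := by
        intro j _; rw [mul_pow]
      rwa [hsum1, e1, Finset.sum_congr rfl e2] at this
    -- rewrite p_j(1-p_j) term
    have hsplit : ∑ j, (Nj j : ℝ) ^ 2 / ((Nj j : ℝ) - 1) * (pj j * (1 - pj j))
        = (∑ j, (Nj j : ℝ) ^ 2 / ((Nj j : ℝ) - 1)) / 4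
          - (∑ j, (Nj j : ℝ) ^ 2 * (2 * pj j - 1) ^ 2 / ((Nj j : ℝ) - 1)) / 4 := by
      rw [Finset.sum_div, Finset.sum_div, ← Finset.sum_sub_distrib]
      refine Finset.sum_congr rfl fun j _ => ?_
      have := (hNj1 j).ne'
      field_simp
      ring
    have hineq : ∑ j, (Nj j : ℝ) ^ 2 / ((Nj j : ℝ) - 1) * (pj j * (1 - pj j))
        ≤ (∑ j, (Nj j : ℝ) ^ 2 / ((Nj j : ℝ) - 1)) / 4
          - (N : ℝ) ^ 2 * (2 * p - 1) ^ 2 / (4 * ((N : ℝ) - m)) := by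
      rw [hsplit]
      have h1 : ((N : ℝ) * (2 * p - 1)) ^ 2 / ((N : ℝ) - m)
          = (N : ℝ) ^ 2 * (2 * p - 1) ^ 2 / ((N : ℝ) - m) := by rw [mul_pow]
      rw [h1] at cs
      have h2 : (N : ℝ) ^ 2 * (2 * p - 1) ^ 2 / (4 * ((N : ℝ) - m))
          = ((N : ℝ) ^ 2 * (2 * p - 1) ^ 2 / ((N : ℝ) - m)) / 4 := by
        rw [div_div]; ring
      rw [h2]
      linarith
    have hc : (0 : ℝ) ≤ ((N : ℝ) - n) / ((N : ℝ) ^ 2 * n) :=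
      div_nonneg hNn.le (by positivity)
    calc (((N : ℝ) - n) / ((N : ℝ) ^ 2 * n)) *
          ∑ j, (Nj j : ℝ) ^ 2 / ((Nj j : ℝ) - 1) * (pj j * (1 - pj j))
        ≤ (((N : ℝ) - n) / ((N : ℝ) ^ 2 * n)) *
          ((∑ j, (Nj j : ℝ) ^ 2 / ((Nj j : ℝ) - 1)) / 4
            - (N : ℝ) ^ 2 * (2 * p - 1) ^ 2 / (4 * ((N : ℝ) - m))) :=
          mul_le_mul_of_nonneg_left hineq hc
      _ = (((N : ℝ) - n) / (4 * ((N : ℝ) - m) * n)) *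
            ((((N : ℝ) - m) / (N : ℝ) ^ 2) * (∑ j, (Nj j : ℝ) ^ 2 / ((Nj j : ℝ) - 1))
              - (2 * p - 1) ^ 2) := by
          field_simp
  · -- the equality
    have hT : ∑ j, (((N : ℝ) - m * Nj j) / ((Nj j : ℝ) - 1))
        = ((N : ℝ) - m) * (∑ j, (Nj j : ℝ) ^ 2 / ((Nj j : ℝ) - 1)) - (N : ℝ) ^ 2 := by
      linarith [key]
    rw [hT, hB]
    field_simp
    ring
end

section
/- Let m ≥ 1, let α_1,…,α_m and β_1,…,β_m be positive reals with ∑_{j=1}^m β_j = 1, and let p ∈ ℝ. Then for all reals p_1,…,p_m with ∑_{j=1}^m β_j (p_j − p) = 0, ∑_{j=1}^m α_j p_j(1−p_j) ≤ (1/4)·( ∑_{j=1}^m α_j − (2p−1)² / ∑_{k=1}^m α_k^{−1} β_k² ), and this bound is attained at p_j = 1/2 + β_j(p − 1/2)/(α_j · ∑_{k=1}^m α_k^{−1} β_k²). -/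
open Finset

/-- The constrained maximization (by Lagrange multipliers) used in
the proof of Theorem 5: over all reals `p₁,…,pₘ` with `∑ⱼ βⱼ(pⱼ - p) = 0`, the
weighted sum `∑ⱼ αⱼ pⱼ(1-pⱼ)` is at most
`(1/4)(∑ⱼ αⱼ - (2p-1)²/∑ₖ αₖ⁻¹βₖ²)`, and this bound is attained at
`pⱼ = 1/2 + βⱼ(p - 1/2)/(αⱼ·∑ₖ αₖ⁻¹βₖ²)`. -/
theorem lagrange_constrained_max (m : ℕ) (hm : 1 ≤ m)
    (α β : Fin m → ℝ) (hα : ∀ j, 0 < α j) (hβ : ∀ j, 0 < β j)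
    (hβsum : ∑ j, β j = 1) (p : ℝ) :
    (∀ pj : Fin m → ℝ, ∑ j, β j * (pj j - p) = 0 →
        ∑ j, α j * (pj j * (1 - pj j))
          ≤ (1 / 4) * ((∑ j, α j) - (2 * p - 1) ^ 2 / ∑ k, (α k)⁻¹ * (β k) ^ 2))
    ∧ (∑ j, β j * ((1 / 2 + β j * (p - 1 / 2) / (α j * ∑ k, (α k)⁻¹ * (β k) ^ 2)) - p)
        = 0)
    ∧ (∑ j, α j * ((1 / 2 + β j * (p - 1 / 2) / (α j * ∑ k, (α k)⁻¹ * (β k) ^ 2)) *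
          (1 - (1 / 2 + β j * (p - 1 / 2) / (α j * ∑ k, (α k)⁻¹ * (β k) ^ 2))))
        = (1 / 4) * ((∑ j, α j) - (2 * p - 1) ^ 2 / ∑ k, (α k)⁻¹ * (β k) ^ 2)) := by
  have hne : Nonempty (Fin m) := ⟨⟨0, hm⟩⟩
  set S : ℝ := ∑ k, (α k)⁻¹ * (β k) ^ 2 with hSdef
  have hS : 0 < S := Finset.sum_pos
    (fun k _ => mul_pos (inv_pos.mpr (hα k)) (pow_pos (hβ k) 2)) univ_nonempty
  refine ⟨?_, ?_, ?_⟩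
  · intro pj hpj
    -- constraint: ∑ βⱼ pⱼ = p
    have hcon : ∑ j, β j * (pj j - 1/2) = p - 1/2 := by
      have h1 : ∑ j, β j * (pj j - p) = (∑ j, β j * pj j) - p := by
        simp [mul_sub, Finset.sum_sub_distrib, ← Finset.sum_mul, hβsum]
      have h2 : ∑ j, β j * (pj j - 1/2) = (∑ j, β j * pj j) - 1/2 := by
        simp [mul_sub, Finset.sum_sub_distrib, ← Finset.sum_mul, hβsum]
      rw [h2]; linarith [hpj, h1 ▸ hpj]
    have cs := sq_sum_div_le_sum_sq_div Finset.univ (fun j => β j * (pj j - 1/2))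
      (g := fun j => (α j)⁻¹ * (β j) ^ 2)
      (fun j _ => mul_pos (inv_pos.mpr (hα j)) (pow_pos (hβ j) 2))
    rw [hcon] at cs
    have hterm : ∀ j, (β j * (pj j - 1/2)) ^ 2 / ((α j)⁻¹ * (β j) ^ 2)
        = α j * (pj j - 1/2) ^ 2 := by
      intro j
      have hαj := (hα j).ne'
      have hβj := (hβ j).ne'
      field_simp
    rw [Finset.sum_congr rfl (fun j _ => hterm j)] at cs
    -- rewrite objective
    have hobj : ∑ j, α j * (pj j * (1 - pj j))
        = (∑ j, α j) / 4 - ∑ j, α j * (pj j - 1/2) ^ 2 := by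
      rw [Finset.sum_div, ← Finset.sum_sub_distrib]
      exact Finset.sum_congr rfl (fun j _ => by ring)
    rw [hobj]
    have hkey : (2 * p - 1) ^ 2 / S = (p - 1/2) ^ 2 / S * 4 := by
      field_simp; ring
    have : (p - 1/2) ^ 2 / S ≤ ∑ j, α j * (pj j - 1/2) ^ 2 := cs
    rw [hkey]
    linarith
  · have hterm : ∀ j, β j * ((1 / 2 + β j * (p - 1 / 2) / (α j * S)) - p)
        = (1/2 - p) * β j + ((p - 1/2) / S) * ((α j)⁻¹ * (β j) ^ 2) := by
      intro j
      have hαj := (hα j).ne'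
      have hS' := hS.ne'
      field_simp
      ring
    rw [Finset.sum_congr rfl (fun j _ => hterm j), Finset.sum_add_distrib,
      ← Finset.mul_sum, ← Finset.mul_sum, hβsum, ← hSdef,
      div_mul_cancel₀ _ hS.ne']
    ring
  · have hterm : ∀ j, α j * ((1 / 2 + β j * (p - 1 / 2) / (α j * S)) *
          (1 - (1 / 2 + β j * (p - 1 / 2) / (α j * S))))
        = α j / 4 - ((p - 1/2) ^ 2 / S ^ 2) * ((α j)⁻¹ * (β j) ^ 2) := by
      intro j
      have hαj := (hα j).ne'
      have hS' := hS.ne'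
      field_simp
      ring
    rw [Finset.sum_congr rfl (fun j _ => hterm j), Finset.sum_sub_distrib,
      ← Finset.mul_sum, ← hSdef, ← Finset.sum_div]
    have hS' := hS.ne'
    field_simp
    ring
end

section
/- The function ψ(x,y) = (1/y − 1)/(1 − x) is strictly convex on the convex set (0,1) × (0, 3/4]; i.e., for any two distinct points (x_1,y_1), (x_2,y_2) in (0,1) × (0,3/4] and any t ∈ (0,1), ψ(t(x_1,y_1) + (1−t)(x_2,y_2)) < t·ψ(x_1,y_1) + (1−t)·ψ(x_2,y_2). -/
lemma psi_key (a1 a2 b1 b2 : ℝ) (ha1 : 0 < a1) (ha2 : 0 < a2)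
    (hb1 : 0 < b1) (hb1' : b1 ≤ 3/4) (hb2 : 0 < b2) (hb2' : b2 ≤ 3/4)
    (hne : a1 ≠ a2 ∨ b1 ≠ b2) :
    0 < b2^2*(1-b1)*a2^2 + b1*(b1-3*b2+2*b2^2)*a1*a2 + b1*b2*(1-b2)*a1^2 := by
  rcases eq_or_ne b1 b2 with h | h
  · have hd : a1 ≠ a2 := hne.resolve_right (by simp [h])
    have hd2 : 0 < (a1 - a2)^2 := by
      have := sub_ne_zero.mpr hd
      positivity
    subst h
    nlinarith [mul_pos (mul_pos (mul_pos hb1 hb1) (show (0:ℝ) < 1 - b1 by linarith)) hd2]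
  · have he2 : 0 < (b1 - b2)^2 := by
      have := sub_ne_zero.mpr h
      positivity
    rcases lt_or_ge b1 (4*b2 - 4*b2^2) with h4 | h4
    · have hA : 0 < b1*b2*(1-b2) := by
        have : (0:ℝ) < 1 - b2 := by linarith
        positivity
      have hE : 0 < b1*(b1-b2)^2*(4*b2-4*b2^2-b1)*a2^2 := by
        have h1 : (0:ℝ) < 4*b2-4*b2^2-b1 := by linarith
        positivity
      nlinarith [sq_nonneg (2*(b1*b2*(1-b2))*a1 + b1*(b1-3*b2+2*b2^2)*a2), hE, hA,
        mul_pos hA (mul_pos ha1 ha1)]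
    · rcases eq_or_lt_of_le hb2' with heq | hlt
      · exfalso
        apply h
        have hb1e : b1 = 3/4 := by
          subst heq; nlinarith [h4]
        rw [hb1e, heq]
      · have hb2q : b2 ≤ 1/4 := by nlinarith
        have hmid : 0 ≤ b1*(b1-3*b2+2*b2^2) := by nlinarith
        have h1b1 : (0:ℝ) < 1 - b1 := by linarith
        have h1b2 : (0:ℝ) < 1 - b2 := by linarith
        nlinarith [mul_pos (mul_pos (mul_pos hb2 hb2) h1b1) (mul_pos ha2 ha2),
          mul_pos (mul_pos (mul_pos hb1 hb2) h1b2) (mul_pos ha1 ha1),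
          mul_nonneg hmid (le_of_lt (mul_pos ha1 ha2))]

/-- The function `ψ(x,y) = (1/y - 1)/(1 - x)` is strictly convex
on `(0,1) × (0, 3/4]`. -/
theorem psi_strictConvexOn :
    StrictConvexOn ℝ ((Set.Ioo (0 : ℝ) 1) ×ˢ (Set.Ioc (0 : ℝ) (3 / 4)))
      (fun q : ℝ × ℝ => (1 / q.2 - 1) / (1 - q.1)) := by
  constructor
  · exact (convex_Ioo (0:ℝ) 1).prod (convex_Ioc (0:ℝ) (3/4))
  · rintro ⟨x1, y1⟩ ⟨hx1, hy1⟩ ⟨x2, y2⟩ ⟨hx2, hy2⟩ hne u v hu hv huv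
    simp only [Set.mem_Ioo, Set.mem_Ioc] at hx1 hy1 hx2 hy2
    have hv' : v = 1 - u := by linarith
    subst hv'
    simp only [Prod.smul_mk, Prod.mk_add_mk, smul_eq_mul]
    -- abbreviations
    have ha1 : 0 < 1 - x1 := by linarith [hx1.2]
    have ha2 : 0 < 1 - x2 := by linarith [hx2.2]
    have hb1 : 0 < y1 := hy1.1
    have hb2 : 0 < y2 := hy2.1
    have ha : 0 < 1 - (u * x1 + (1 - u) * x2) := by nlinarith [hx1.2, hx2.2]
    have hb : 0 < u * y1 + (1 - u) * y2 := by nlinarith [hy1.1, hy2.1]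
    have hne' : (1 - x1) ≠ (1 - x2) ∨ y1 ≠ y2 := by
      rcases eq_or_ne x1 x2 with hx | hx
      · right
        intro hy
        exact hne (by rw [hx, hy])
      · left
        intro hc
        exact hx (by linarith)
    have hG0 := psi_key (1 - x1) (1 - x2) y1 y2 ha1 ha2 hb1 hy1.2 hb2 hy2.2 hne'
    have hG1 := psi_key (1 - x2) (1 - x1) y2 y1 ha2 ha1 hb2 hy2.2 hb1 hy1.2
      (by tauto)
    set a1 := 1 - x1
    set a2 := 1 - x2
    have hF : 0 < u * (1 - u) *
        ((1 - u) * (y2^2*(1-y1)*a2^2 + y1*(y1-3*y2+2*y2^2)*a1*a2 + y1*y2*(1-y2)*a1^2)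
         + u * (y1^2*(1-y2)*a1^2 + y2*(y2-3*y1+2*y1^2)*a2*a1 + y2*y1*(1-y1)*a2^2)) := by
      have h1u : 0 < 1 - u := hv
      have : 0 < (1 - u) * (y2^2*(1-y1)*a2^2 + y1*(y1-3*y2+2*y2^2)*a1*a2 + y1*y2*(1-y2)*a1^2)
         + u * (y1^2*(1-y2)*a1^2 + y2*(y2-3*y1+2*y1^2)*a2*a1 + y2*y1*(1-y1)*a2^2) := by
        have := mul_pos h1u hG0
        have := mul_pos hu hG1
        linarith
      positivity
    have hid : u * ((1 / y1 - 1) / (1 - x1)) + (1 - u) * ((1 / y2 - 1) / (1 - x2))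
        - (1 / (u * y1 + (1 - u) * y2) - 1) / (1 - (u * x1 + (1 - u) * x2))
        = (u * (1 - u) *
        ((1 - u) * (y2^2*(1-y1)*a2^2 + y1*(y1-3*y2+2*y2^2)*a1*a2 + y1*y2*(1-y2)*a1^2)
         + u * (y1^2*(1-y2)*a1^2 + y2*(y2-3*y1+2*y1^2)*a2*a1 + y2*y1*(1-y1)*a2^2)))
        / ((1 - (u * x1 + (1 - u) * x2)) * (u * y1 + (1 - u) * y2) * a1 * y1 * a2 * y2) := by
      have e1 : (1 - x1) ≠ 0 := by linarith [hx1.2]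
      have e2 : (1 - x2) ≠ 0 := by linarith [hx2.2]
      field_simp
      ring
    have hden : 0 < (1 - (u * x1 + (1 - u) * x2)) * (u * y1 + (1 - u) * y2) * a1 * y1 * a2 * y2 := by
      positivity
    have := div_pos hF hden
    linarith [hid ▸ this]
end
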